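/- Let κ be a type of keys and let prod : List (κ × ℕ) → (κ × ℕ) → Prop be a deflation-preserving production relation, with immediate consequence operator T(I) = {h | ∃ l, every element of l belongs to I and prod l h}. Then the min constraint γ_min is PreM to T: for every I ⊆ κ × ℕ, γ_min(T(I)) = γ_min(T(γ_min(I))). -/

import Mathlib

/-- The immediate consequence operator of a production relation. -/
def ico {κ : Type*} (prod : List (κ × ℕ) → (κ × ℕ) → Prop) (I : Set (κ × ℕ)) :
    Set (κ × ℕ) :=
  {h | ∃ l : List (κ × ℕ), (∀ x ∈ l, x ∈ I) ∧ prod l h}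

/-- `l'` deflates `l`: same length, componentwise same keys and costs of `l'` ≤ costs of `l`. -/
def Deflates {κ : Type*} (l' l : List (κ × ℕ)) : Prop :=
  List.Forall₂ (fun a b => a.1 = b.1 ∧ a.2 ≤ b.2) l' l

/-- `prod` is deflation-preserving. -/
def DeflationPreserving {κ : Type*} (prod : List (κ × ℕ) → (κ × ℕ) → Prop) : Prop :=
  ∀ l h l', prod l h → Deflates l' l →
    ∃ h' : κ × ℕ, h'.1 = h.1 ∧ h'.2 ≤ h.2 ∧ prod l' h'

/-- The min constraint: keep only the tuples of minimal cost for each key. -/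
def gammaMin {κ : Type*} (S : Set (κ × ℕ)) : Set (κ × ℕ) :=
  {p | p ∈ S ∧ ∀ q ∈ S, q.1 = p.1 → p.2 ≤ q.2}

theorem min_prem_of_deflation_preserving
    {κ : Type*} (prod : List (κ × ℕ) → (κ × ℕ) → Prop)
    (hdp : DeflationPreserving prod) :
    ∀ I : Set (κ × ℕ),
      gammaMin (ico prod I) = gammaMin (ico prod (gammaMin I)) := by
  intro I
  -- For every tuple in I there is a minimal-cost tuple with the same key in gammaMin I
  have hmin : ∀ x ∈ I, ∃ y ∈ gammaMin I, y.1 = x.1 ∧ y.2 ≤ x.2 := by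
    intro x hx
    have hne : ∃ c, (x.1, c) ∈ I := ⟨x.2, hx⟩
    refine ⟨(x.1, sInf {c | (x.1, c) ∈ I}), ⟨?_, ?_⟩, rfl, ?_⟩
    · exact Nat.sInf_mem hne
    · rintro ⟨k, c⟩ hq hk
      simp only at hk; subst hk
      exact Nat.sInf_le hq
    · exact Nat.sInf_le hx
  -- T is monotone on gammaMin I ⊆ I
  have hmono : ico prod (gammaMin I) ⊆ ico prod I := by
    rintro h ⟨l, hl, hp⟩
    exact ⟨l, fun x hx => (hl x hx).1, hp⟩
  -- key lemma
  have key : ∀ h ∈ ico prod I, ∃ h' ∈ ico prod (gammaMin I), h'.1 = h.1 ∧ h'.2 ≤ h.2 := by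
    rintro h ⟨l, hl, hp⟩
    choose f hf1 hf2 hf3 using hmin
    classical
    let g : κ × ℕ → κ × ℕ := fun x => if hx : x ∈ I then f x hx else x
    have hdef : ∀ l : List (κ × ℕ), (∀ x ∈ l, x ∈ I) → Deflates (l.map g) l := by
      intro l
      induction l with
      | nil => exact fun _ => List.Forall₂.nil
      | cons a t ih =>
        intro hl
        have ha : a ∈ I := hl a List.mem_cons_self
        refine List.Forall₂.cons ?_ (ih (fun x hx => hl x (List.mem_cons_of_mem a hx)))
        simp only [g, dif_pos ha]
        exact ⟨hf2 a ha, hf3 a ha⟩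
    have hdef := hdef l hl
    obtain ⟨h', hk, hc, hp'⟩ := hdp l h (l.map g) hp hdef
    refine ⟨h', ⟨l.map g, ?_, hp'⟩, hk, hc⟩
    intro x hx
    obtain ⟨y, hy, rfl⟩ := List.mem_map.mp hx
    have hyI : y ∈ I := hl y hy
    simp only [g, dif_pos hyI]
    exact hf1 y hyI
  ext p
  constructor
  · rintro ⟨hp, hm⟩
    obtain ⟨p', hp', hk, hc⟩ := key p hp
    have hc' : p.2 ≤ p'.2 := hm p' (hmono hp') hk
    have : p' = p := Prod.ext hk (le_antisymm hc hc')
    subst this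
    exact ⟨hp', fun q hq hqk => hm q (hmono hq) hqk⟩
  · rintro ⟨hp, hm⟩
    refine ⟨hmono hp, ?_⟩
    intro q hq hqk
    obtain ⟨q', hq', hk, hc⟩ := key q hq
    exact le_trans (hm q' hq' (hk.trans hqk)) hc
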